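/- arXiv:1112.4254 — 4 statements merged into one kernel-verified Lean document; each statement's English description precedes it below -/
import Mathlib

section
/- If μ and ν are probability distributions on a finite set X and S : X → ℝ satisfies |E_μ(S) − E_ν(S)| ≥ r σ, where σ² = (Var_μ(S) + Var_ν(S))/2 > 0 and r > 0, then the total variation distance satisfies ‖μ − ν‖_TV ≥ 1 − 4/(4 + r²). -/
open Finset

lemma second_moment_shift {X : Type*} [Fintype X] (w S : X → ℝ)
    (hw : ∑ x, w x = 1) (c : ℝ) :
    ∑ x, w x * (S x - c) ^ 2
      = (∑ x, w x * (S x - ∑ y, w y * S y) ^ 2) + ((∑ y, w y * S y) - c) ^ 2 := by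
  have h : ∀ d : ℝ, ∑ x, w x * (S x - d) ^ 2
      = (∑ x, w x * (S x) ^ 2) - 2 * d * (∑ x, w x * S x) + d ^ 2 := by
    intro d
    have h1 : ∀ x, w x * (S x - d) ^ 2
        = w x * (S x) ^ 2 - 2 * d * (w x * S x) + d ^ 2 * w x := fun x => by ring
    simp_rw [h1, Finset.sum_add_distrib, Finset.sum_sub_distrib, ← Finset.mul_sum, hw]
    ring
  rw [h c, h (∑ y, w y * S y)]
  ring

/-- Method of distinguishing statistics: if `|E_μ S − E_ν S| ≥ r σ` with
`σ² = (Var_μ S + Var_ν S)/2 > 0`, then the total variation distance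
`max_A (μ(A) − ν(A))` is at least `1 − 4/(4+r²)`. -/
theorem stmt1 {X : Type*} [Fintype X] [Nonempty X] (μ ν : X → ℝ) (S : X → ℝ) (r σ : ℝ)
    (hμ0 : ∀ x, 0 ≤ μ x) (hν0 : ∀ x, 0 ≤ ν x)
    (hμ1 : ∑ x, μ x = 1) (hν1 : ∑ x, ν x = 1)
    (hr : 0 < r) (hσpos : 0 < σ)
    (hσ : σ ^ 2 = ((∑ x, μ x * (S x - ∑ y, μ y * S y) ^ 2)
        + (∑ x, ν x * (S x - ∑ y, ν y * S y) ^ 2)) / 2)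
    (hE : |(∑ x, μ x * S x) - ∑ x, ν x * S x| ≥ r * σ) :
    (Finset.univ.powerset.sup' (Finset.powerset_nonempty _)
        (fun A : Finset X => (∑ x ∈ A, μ x) - ∑ x ∈ A, ν x))
      ≥ 1 - 4 / (4 + r ^ 2) := by
  set mμ := ∑ x, μ x * S x with hmμ
  set mν := ∑ x, ν x * S x with hmν
  set Δ := mμ - mν with hΔ
  set c := (mμ + mν) / 2 with hc
  set d : X → ℝ := fun x => μ x - ν x with hd
  set T := ∑ x, |d x| with hT
  -- sum of d is zero
  have hdsum : ∑ x, d x = 0 := by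
    simp only [hd, Finset.sum_sub_distrib, hμ1, hν1, sub_self]
  -- key identity: Δ = ∑ d x * (S x - c)
  have hkey : Δ = ∑ x, d x * (S x - c) := by
    have : ∀ x, d x * (S x - c) = (μ x * S x - ν x * S x) - c * d x := fun x => by
      simp only [hd]; ring
    simp_rw [this, Finset.sum_sub_distrib, ← Finset.mul_sum, hdsum, mul_zero, sub_zero]
    rfl
  -- Cauchy-Schwarz
  set f : X → ℝ := fun x => Real.sqrt |d x| * (if 0 ≤ d x then 1 else -1) with hf
  set g : X → ℝ := fun x => Real.sqrt |d x| * (S x - c) with hg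
  have hfg : ∀ x, f x * g x = d x * (S x - c) := by
    intro x
    have hs : Real.sqrt |d x| * Real.sqrt |d x| = |d x| :=
      Real.mul_self_sqrt (abs_nonneg _)
    by_cases h : 0 ≤ d x
    · simp only [hf, hg, if_pos h]
      rw [show Real.sqrt |d x| * 1 * (Real.sqrt |d x| * (S x - c))
          = (Real.sqrt |d x| * Real.sqrt |d x|) * (S x - c) by ring, hs, abs_of_nonneg h]
    · simp only [hf, hg, if_neg h]
      rw [show Real.sqrt |d x| * (-1) * (Real.sqrt |d x| * (S x - c))
          = -((Real.sqrt |d x| * Real.sqrt |d x|) * (S x - c)) by ring, hs,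
        abs_of_neg (lt_of_not_ge h)]
      ring
  have hf2 : ∀ x, f x ^ 2 = |d x| := by
    intro x
    have hs : Real.sqrt |d x| ^ 2 = |d x| := Real.sq_sqrt (abs_nonneg _)
    by_cases h : 0 ≤ d x <;> simp only [hf, if_pos, if_neg, h, if_true, if_false] <;>
      rw [mul_pow] <;> simp [hs]
  have hg2 : ∀ x, g x ^ 2 = |d x| * (S x - c) ^ 2 := by
    intro x
    simp only [hg, mul_pow, Real.sq_sqrt (abs_nonneg _)]
  have hCS : Δ ^ 2 ≤ T * ∑ x, |d x| * (S x - c) ^ 2 := by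
    have := Finset.sum_mul_sq_le_sq_mul_sq Finset.univ f g
    simp_rw [hfg, hf2, hg2] at this
    rwa [hkey, hT]
  -- bound second factor
  have hQR : ∑ x, |d x| * (S x - c) ^ 2 ≤ ∑ x, (μ x + ν x) * (S x - c) ^ 2 := by
    apply Finset.sum_le_sum
    intro x _
    apply mul_le_mul_of_nonneg_right _ (sq_nonneg _)
    rw [abs_le]
    constructor
    · simp only [hd]; nlinarith [hμ0 x, hν0 x]
    · simp only [hd]; nlinarith [hμ0 x, hν0 x]
  have hR : ∑ x, (μ x + ν x) * (S x - c) ^ 2 = 2 * σ ^ 2 + Δ ^ 2 / 2 := by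
    have h1 := second_moment_shift μ S hμ1 c
    have h2 := second_moment_shift ν S hν1 c
    have hsplit : ∑ x, (μ x + ν x) * (S x - c) ^ 2
        = (∑ x, μ x * (S x - c) ^ 2) + ∑ x, ν x * (S x - c) ^ 2 := by
      rw [← Finset.sum_add_distrib]; apply Finset.sum_congr rfl; intro x _; ring
    rw [hsplit, h1, h2, hσ]
    simp only [← hmμ, ← hmν, hc, hΔ]
    ring
  -- total variation: the set A = {x | ν x < μ x} achieves T/2
  set A : Finset X := Finset.univ.filter (fun x => 0 < d x) with hA
  have hAval : (∑ x ∈ A, μ x) - ∑ x ∈ A, ν x = T / 2 := by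
    have e1 : (∑ x ∈ A, μ x) - ∑ x ∈ A, ν x = ∑ x ∈ A, d x := by
      rw [← Finset.sum_sub_distrib]
    have e2 : ∑ x ∈ A, d x + ∑ x ∈ Finset.univ.filter (fun x => ¬ 0 < d x), d x = 0 := by
      rw [hA, Finset.sum_filter_add_sum_filter_not]; exact hdsum
    have e3 : T = ∑ x ∈ A, d x + ∑ x ∈ Finset.univ.filter (fun x => ¬ 0 < d x), (- d x) := by
      rw [hT, ← Finset.sum_filter_add_sum_filter_not Finset.univ (fun x => 0 < d x) (fun x => |d x|)]
      congr 1
      · apply Finset.sum_congr rfl; intro x hx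
        rw [Finset.mem_filter] at hx
        exact abs_of_pos hx.2
      · apply Finset.sum_congr rfl; intro x hx
        rw [Finset.mem_filter] at hx
        exact abs_of_nonpos (le_of_not_gt hx.2)
    rw [e1]
    rw [Finset.sum_neg_distrib] at e3
    linarith
  -- T/2 ≥ r²/(4+r²)
  have hT0 : 0 ≤ T := Finset.sum_nonneg fun x _ => abs_nonneg _
  have hΔ2 : Δ ^ 2 ≥ r ^ 2 * σ ^ 2 := by
    have h1 : |Δ| ≥ r * σ := hE
    have h2 : |Δ| ^ 2 ≥ (r * σ) ^ 2 := by
      apply pow_le_pow_left₀ (by positivity) h1 2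
    rw [sq_abs] at h2
    nlinarith
  have hmain : Δ ^ 2 ≤ T / 2 * (4 * σ ^ 2 + Δ ^ 2) := by
    calc Δ ^ 2 ≤ T * ∑ x, |d x| * (S x - c) ^ 2 := hCS
      _ ≤ T * (2 * σ ^ 2 + Δ ^ 2 / 2) := by
          apply mul_le_mul_of_nonneg_left _ hT0
          rw [← hR]; exact hQR
      _ = T / 2 * (4 * σ ^ 2 + Δ ^ 2) := by ring
  have hσ2 : 0 < σ ^ 2 := by positivity
  have hfinal : T / 2 ≥ r ^ 2 / (4 + r ^ 2) := by
    rw [ge_iff_le, div_le_iff₀ (by positivity)]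
    nlinarith [sq_nonneg r, mul_nonneg hT0 (le_of_lt hσ2)]
  have hgoal : 1 - 4 / (4 + r ^ 2) = r ^ 2 / (4 + r ^ 2) := by
    field_simp
    ring
  rw [ge_iff_le, hgoal]
  calc r ^ 2 / (4 + r ^ 2) ≤ T / 2 := hfinal
    _ = (∑ x ∈ A, μ x) - ∑ x ∈ A, ν x := hAval.symm
    _ ≤ _ := Finset.le_sup' (fun A : Finset X => (∑ x ∈ A, μ x) - ∑ x ∈ A, ν x) (Finset.mem_powerset.mpr (Finset.subset_univ A))
end

section
/- For the lazy Metropolis chain started at the all-ones state, Var_1(S_t) ≤ n/(1+θ)², where S_t = S(X_t). -/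
open Finset

/-- number of ones of a vertex of the hypercube -/
def numOnes {n : ℕ} (x : Fin n → Bool) : ℕ :=
  (Finset.univ.filter fun i => x i = true).card

/-- Hamming distance -/
def ham {n : ℕ} (x y : Fin n → Bool) : ℕ :=
  (Finset.univ.filter fun i => x i ≠ y i).card

/-- Transition kernel of the lazy random walk Metropolis chain for
`π(x) = θ^{S(x)}(1+θ)^{-n}`. -/
noncomputable def metroP (n : ℕ) (θ : ℝ) (x y : Fin n → Bool) : ℝ :=
  if y = x then 1 / 2 + ((n : ℝ) - numOnes x) / (2 * n) * (1 - θ)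
  else if ham x y = 1 then
    (if numOnes y < numOnes x then 1 / (2 * n) else θ / (2 * n))
  else 0


variable {n : ℕ}

lemma filter_update_false (x : Fin n → Bool) (i : Fin n) :
    (univ.filter fun j => Function.update x i false j = true)
      = (univ.filter fun j => x j = true).erase i := by
  ext j
  by_cases h : j = i <;> simp [Function.update_apply, h]

lemma filter_update_true (x : Fin n → Bool) (i : Fin n) :
    (univ.filter fun j => Function.update x i true j = true)
      = insert i (univ.filter fun j => x j = true) := by
  ext j
  by_cases h : j = i <;> simp [Function.update_apply, h]

lemma numOnes_flip_true (x : Fin n → Bool) (i : Fin n) (h : x i = true) :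
    (numOnes (Function.update x i (!x i)) : ℝ) = (numOnes x : ℝ) - 1 := by
  have hi : i ∈ univ.filter fun j => x j = true := by simp [h]
  have : numOnes (Function.update x i (!x i))
      = ((univ.filter fun j => x j = true).erase i).card := by
    rw [h]; exact congrArg Finset.card (filter_update_false x i)
  rw [this, Finset.card_erase_of_mem hi]
  have : 1 ≤ (univ.filter fun j => x j = true).card := Finset.card_pos.mpr ⟨i, hi⟩
  push_cast [Nat.cast_sub this]
  rfl

lemma numOnes_flip_false (x : Fin n → Bool) (i : Fin n) (h : x i = false) :
    (numOnes (Function.update x i (!x i)) : ℝ) = (numOnes x : ℝ) + 1 := by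
  have hi : i ∉ univ.filter fun j => x j = true := by simp [h]
  have : numOnes (Function.update x i (!x i))
      = (insert i (univ.filter fun j => x j = true)).card := by
    rw [h]; exact congrArg Finset.card (filter_update_true x i)
  rw [this, Finset.card_insert_of_notMem hi]
  push_cast; rfl

lemma flip_ne (x : Fin n → Bool) (i : Fin n) : Function.update x i (!x i) ≠ x := by
  intro h
  have := congrFun h i
  simp [Function.update_apply] at this

lemma ham_flip (x : Fin n → Bool) (i : Fin n) : ham x (Function.update x i (!x i)) = 1 := by
  have : (univ.filter fun j => x j ≠ Function.update x i (!x i) j) = {i} := by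
    ext j
    by_cases h : j = i <;> simp [Function.update_apply, h]
  rw [ham, this, Finset.card_singleton]

lemma flip_inj (x : Fin n → Bool) : Function.Injective (fun i => Function.update x i (!x i)) := by
  intro i j h
  by_contra hij
  have := congrFun h i
  simp [Function.update_apply, hij, Ne.symm hij] at this

lemma ham_one_exists (x y : Fin n → Bool) (h : ham x y = 1) :
    ∃ i, y = Function.update x i (!x i) := by
  obtain ⟨i, hi⟩ := Finset.card_eq_one.mp h
  have hmem : i ∈ univ.filter fun j => x j ≠ y j := by rw [hi]; simp
  simp only [mem_filter] at hmem
  refine ⟨i, funext fun j => ?_⟩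
  by_cases hj : j = i
  · subst hj
    simp only [Function.update_self]
    revert hmem; cases x j <;> cases y j <;> simp
  · have : j ∉ univ.filter fun k => x k ≠ y k := by rw [hi]; simp [hj]
    simp only [mem_filter, mem_univ, true_and, not_not] at this
    simp [Function.update_apply, hj, this.symm]

lemma numOnes_le (x : Fin n → Bool) : numOnes x ≤ n := by
  have : (univ.filter fun i => x i = true).card ≤ (univ : Finset (Fin n)).card :=
    Finset.card_filter_le _ _
  simpa [numOnes] using this

lemma row_sum (θ : ℝ) (x : Fin n → Bool) (f : ℝ → ℝ) :
    ∑ y, metroP n θ x y * f (numOnes y)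
    = (1 / 2 + ((n : ℝ) - numOnes x) / (2 * n) * (1 - θ)) * f (numOnes x)
      + (numOnes x : ℝ) / (2 * n) * f ((numOnes x : ℝ) - 1)
      + θ * ((n : ℝ) - numOnes x) / (2 * n) * f ((numOnes x : ℝ) + 1) := by
  classical
  have hxmem : x ∈ (univ : Finset (Fin n → Bool)) := mem_univ x
  rw [← Finset.add_sum_erase univ _ hxmem]
  have hdiag : metroP n θ x x = 1 / 2 + ((n : ℝ) - numOnes x) / (2 * n) * (1 - θ) := by
    simp [metroP]
  -- restrict erase-sum to image of flips
  set B : Finset (Fin n → Bool) := univ.image (fun i => Function.update x i (!x i)) with hB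
  have hBsub : B ⊆ univ.erase x := by
    intro y hy
    simp only [hB, mem_image] at hy
    obtain ⟨i, _, rfl⟩ := hy
    exact Finset.mem_erase.mpr ⟨flip_ne x i, mem_univ _⟩
  have hzero : ∀ y ∈ univ.erase x, y ∉ B → metroP n θ x y * f (numOnes y) = 0 := by
    intro y hy hyB
    have hyx : y ≠ x := (Finset.mem_erase.mp hy).1
    have hham : ham x y ≠ 1 := by
      intro h
      obtain ⟨i, rfl⟩ := ham_one_exists x y h
      exact hyB (Finset.mem_image.mpr ⟨i, mem_univ i, rfl⟩)
    simp [metroP, hyx, hham]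
  rw [← Finset.sum_subset hBsub hzero, hB,
    Finset.sum_image (fun i _ j _ h => flip_inj x h)]
  -- evaluate the terms over i
  have hterm : ∀ i : Fin n,
      metroP n θ x (Function.update x i (!x i)) * f (numOnes (Function.update x i (!x i)))
      = if x i = true then 1 / (2 * (n:ℝ)) * f ((numOnes x : ℝ) - 1)
        else θ / (2 * (n:ℝ)) * f ((numOnes x : ℝ) + 1) := by
    intro i
    by_cases h : x i = true
    · have h1 := numOnes_flip_true x i h
      have hlt : numOnes (Function.update x i (!x i)) < numOnes x := by
        have : (numOnes (Function.update x i (!x i)) : ℝ) < numOnes x := by rw [h1]; linarith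
        exact_mod_cast this
      rw [metroP, if_neg (flip_ne x i), if_pos (ham_flip x i), if_pos hlt, h1, if_pos h]
    · have hb : x i = false := by simpa using h
      have h1 := numOnes_flip_false x i hb
      have hlt : ¬ numOnes (Function.update x i (!x i)) < numOnes x := by
        intro hc
        have : (numOnes (Function.update x i (!x i)) : ℝ) < numOnes x := by exact_mod_cast hc
        rw [h1] at this; linarith
      rw [metroP, if_neg (flip_ne x i), if_pos (ham_flip x i), if_neg hlt, h1, if_neg h]
  rw [Finset.sum_congr rfl (fun i _ => hterm i), Finset.sum_ite, Finset.sum_const,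
    Finset.sum_const]
  have hcard1 : (univ.filter fun i => x i = true).card = numOnes x := rfl
  have hcard2 : ((univ.filter fun i => ¬ x i = true).card : ℝ) = (n : ℝ) - numOnes x := by
    have h := Finset.card_filter_add_card_filter_not (s := (univ : Finset (Fin n)))
      (p := fun i => x i = true)
    have hu : (univ : Finset (Fin n)).card = n := by simp
    have hc : (univ.filter fun i => ¬ x i = true).card = n - numOnes x := by
      have h1 : numOnes x + (univ.filter fun a => ¬ x a = true).card = n := by
        simpa [numOnes, hu] using h
      omega
    rw [hc, Nat.cast_sub (numOnes_le x)]
  rw [nsmul_eq_mul, nsmul_eq_mul, hcard1, hcard2, hdiag]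
  ring

lemma algM1 (nr θ G : ℝ) (hn : nr ≠ 0) (hθ : 1 + θ ≠ 0) :
    (1 - (1 + θ) / (2 * nr)) * ((nr * θ + nr * G) / (1 + θ)) + θ / 2 * 1
      = (nr * θ + nr * (G * (1 - (1 + θ) / (2 * nr)))) / (1 + θ) := by
  field_simp
  ring

lemma algM2 (nr θ G A : ℝ) (hn : nr ≠ 0) (hθ : 1 + θ ≠ 0) :
    (1 - (1 + θ) / nr) * (((nr * θ + nr * G) / (1 + θ)) ^ 2
        + (nr * (θ + G) * (1 - G) + nr * (nr - 1) * (A - G ^ 2)) / (1 + θ) ^ 2)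
      + (θ + (1 - θ) / (2 * nr)) * ((nr * θ + nr * G) / (1 + θ)) + θ / 2 * 1
    = ((nr * θ + nr * (G * (1 - (1 + θ) / (2 * nr)))) / (1 + θ)) ^ 2
      + (nr * (θ + G * (1 - (1 + θ) / (2 * nr))) * (1 - G * (1 - (1 + θ) / (2 * nr)))
          + nr * (nr - 1) * (A * (1 - (1 + θ) / nr) - (G * (1 - (1 + θ) / (2 * nr))) ^ 2))
        / (1 + θ) ^ 2 := by
  field_simp
  ring

lemma step_sum (θ : ℝ) (μ : ℕ → (Fin n → Bool) → ℝ)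
    (hμ : ∀ t x, μ (t + 1) x = ∑ y, μ t y * metroP n θ y x) (f : ℝ → ℝ) (t : ℕ) :
    ∑ x, μ (t + 1) x * f (numOnes x)
    = ∑ y, μ t y *
        ((1 / 2 + ((n : ℝ) - numOnes y) / (2 * n) * (1 - θ)) * f (numOnes y)
          + (numOnes y : ℝ) / (2 * n) * f ((numOnes y : ℝ) - 1)
          + θ * ((n : ℝ) - numOnes y) / (2 * n) * f ((numOnes y : ℝ) + 1)) := by
  simp_rw [hμ, Finset.sum_mul]
  rw [Finset.sum_comm]
  refine Finset.sum_congr rfl fun y _ => ?_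
  rw [← row_sum θ y f, Finset.mul_sum]
  exact Finset.sum_congr rfl fun x _ => by ring

lemma numOnes_ones : numOnes (fun _ : Fin n => true) = n := by
  simp [numOnes]

/-- For the lazy Metropolis chain started at the all-ones state,
`Var_1(S_t) ≤ n/(1+θ)²`. -/
theorem stmt9 (n : ℕ) (hn : 0 < n) (θ : ℝ) (hθ0 : 0 < θ) (hθ1 : θ ≤ 1)
    (μ : ℕ → (Fin n → Bool) → ℝ)
    (hμ0 : μ 0 = fun x => if x = (fun _ => true) then 1 else 0)
    (hμ : ∀ t x, μ (t + 1) x = ∑ y, μ t y * metroP n θ y x)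
    (t : ℕ) :
    (∑ x, μ t x * (numOnes x : ℝ) ^ 2) - (∑ x, μ t x * (numOnes x : ℝ)) ^ 2
      ≤ n / (1 + θ) ^ 2 := by
  have hnR : (0 : ℝ) < n := by exact_mod_cast hn
  have hn0 : (n : ℝ) ≠ 0 := ne_of_gt hnR
  have hθ : (0 : ℝ) < 1 + θ := by linarith
  have hθne : (1 + θ : ℝ) ≠ 0 := ne_of_gt hθ
  set g : ℝ := 1 - (1 + θ) / (2 * n) with hg
  set a : ℝ := 1 - (1 + θ) / n with ha
  have key : ∀ t : ℕ,
      (∑ x, μ t x) = 1 ∧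
      (∑ x, μ t x * (numOnes x : ℝ)) = ((n : ℝ) * θ + n * g ^ t) / (1 + θ) ∧
      (∑ x, μ t x * (numOnes x : ℝ) ^ 2)
        = (((n : ℝ) * θ + n * g ^ t) / (1 + θ)) ^ 2
          + ((n : ℝ) * (θ + g ^ t) * (1 - g ^ t)
              + (n : ℝ) * ((n : ℝ) - 1) * (a ^ t - (g ^ t) ^ 2)) / (1 + θ) ^ 2 := by
    intro t
    induction t with
    | zero =>
      refine ⟨?_, ?_, ?_⟩
      · simp [hμ0]
      · rw [hμ0]
        simp only [ite_mul, one_mul, zero_mul]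
        rw [Finset.sum_ite_eq' univ (fun _ => true) (fun x => (numOnes x : ℝ))]
        simp [numOnes_ones]
        field_simp
        ring
      · rw [hμ0]
        simp only [ite_mul, one_mul, zero_mul]
        rw [Finset.sum_ite_eq' univ (fun _ => true) (fun x => (numOnes x : ℝ) ^ 2)]
        simp [numOnes_ones]
        field_simp
        ring
    | succ t ih =>
      obtain ⟨h0, h1, h2⟩ := ih
      -- mass
      have hmass : (∑ x, μ (t+1) x) = 1 := by
        have e1 : (∑ x, μ (t+1) x) = ∑ x, μ (t+1) x * (fun _ : ℝ => (1:ℝ)) (numOnes x) := by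
          simp
        rw [e1, step_sum θ μ hμ (fun _ => 1) t]
        have e2 : ∀ y : Fin n → Bool, μ t y *
            ((1 / 2 + ((n : ℝ) - numOnes y) / (2 * n) * (1 - θ)) * 1
              + (numOnes y : ℝ) / (2 * n) * 1
              + θ * ((n : ℝ) - numOnes y) / (2 * n) * 1) = μ t y := by
          intro y
          have : (1 / 2 + ((n : ℝ) - numOnes y) / (2 * n) * (1 - θ)) * 1
              + (numOnes y : ℝ) / (2 * n) * 1
              + θ * ((n : ℝ) - numOnes y) / (2 * n) * 1 = 1 := by
            field_simp
            ring
          rw [this, mul_one]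
        rw [Finset.sum_congr rfl fun y _ => e2 y, h0]
      have hM1 : (∑ x, μ (t+1) x * (numOnes x : ℝ))
          = ((n : ℝ) * θ + n * g ^ (t+1)) / (1 + θ) := by
        rw [step_sum θ μ hμ (fun s => s) t]
        have e2 : ∀ y : Fin n → Bool, μ t y *
            ((1 / 2 + ((n : ℝ) - numOnes y) / (2 * n) * (1 - θ)) * (numOnes y : ℝ)
              + (numOnes y : ℝ) / (2 * n) * ((numOnes y : ℝ) - 1)
              + θ * ((n : ℝ) - numOnes y) / (2 * n) * ((numOnes y : ℝ) + 1))
            = g * (μ t y * (numOnes y : ℝ)) + θ / 2 * μ t y := by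
          intro y
          have : (1 / 2 + ((n : ℝ) - numOnes y) / (2 * n) * (1 - θ)) * (numOnes y : ℝ)
              + (numOnes y : ℝ) / (2 * n) * ((numOnes y : ℝ) - 1)
              + θ * ((n : ℝ) - numOnes y) / (2 * n) * ((numOnes y : ℝ) + 1)
              = g * (numOnes y : ℝ) + θ / 2 := by
            rw [hg]; field_simp; ring
          rw [this]; ring
        rw [Finset.sum_congr rfl fun y _ => e2 y, Finset.sum_add_distrib,
          ← Finset.mul_sum, ← Finset.mul_sum, h0, h1, pow_succ, hg]
        exact algM1 _ _ _ hn0 hθne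
      refine ⟨hmass, hM1, ?_⟩
      rw [step_sum θ μ hμ (fun s => s ^ 2) t]
      have e2 : ∀ y : Fin n → Bool, μ t y *
          ((1 / 2 + ((n : ℝ) - numOnes y) / (2 * n) * (1 - θ)) * (numOnes y : ℝ) ^ 2
            + (numOnes y : ℝ) / (2 * n) * ((numOnes y : ℝ) - 1) ^ 2
            + θ * ((n : ℝ) - numOnes y) / (2 * n) * ((numOnes y : ℝ) + 1) ^ 2)
          = a * (μ t y * (numOnes y : ℝ) ^ 2)
            + (θ + (1 - θ) / (2 * n)) * (μ t y * (numOnes y : ℝ)) + θ / 2 * μ t y := by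
        intro y
        have : (1 / 2 + ((n : ℝ) - numOnes y) / (2 * n) * (1 - θ)) * (numOnes y : ℝ) ^ 2
            + (numOnes y : ℝ) / (2 * n) * ((numOnes y : ℝ) - 1) ^ 2
            + θ * ((n : ℝ) - numOnes y) / (2 * n) * ((numOnes y : ℝ) + 1) ^ 2
            = a * (numOnes y : ℝ) ^ 2 + (θ + (1 - θ) / (2 * n)) * (numOnes y : ℝ) + θ / 2 := by
          rw [ha]; field_simp; ring
        rw [this]; ring
      rw [Finset.sum_congr rfl fun y _ => e2 y, Finset.sum_add_distrib,
        Finset.sum_add_distrib, ← Finset.mul_sum, ← Finset.mul_sum, ← Finset.mul_sum,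
        h0, h1, h2, pow_succ g, pow_succ a]
      generalize g ^ t = G
      generalize a ^ t = A
      rw [hg, ha]
      exact algM2 _ _ _ _ hn0 hθne
  obtain ⟨h0, h1, h2⟩ := key t
  rw [h1, h2]
  have hGn : (0 : ℝ) ≤ g := by
    rw [hg]
    have : (1 + θ) / (2 * n) ≤ 1 := by
      rw [div_le_one (by positivity)]
      have : (1:ℝ) ≤ n := by exact_mod_cast hn
      linarith
    linarith
  have hG1 : g ≤ 1 := by
    rw [hg]
    have : 0 < (1 + θ) / (2 * n) := by positivity
    linarith
  have hGt0 : (0:ℝ) ≤ g ^ t := pow_nonneg hGn t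
  have hGt1 : g ^ t ≤ 1 := pow_le_one₀ hGn hG1
  have hterm2 : (n : ℝ) * ((n : ℝ) - 1) * (a ^ t - (g ^ t) ^ 2) ≤ 0 := by
    rcases eq_or_lt_of_le (Nat.one_le_iff_ne_zero.mpr (Nat.pos_iff_ne_zero.mp hn)) with h | h
    · have : ((n : ℝ) - 1) = 0 := by
        rw [← h]; norm_num
      rw [this]; simp
    · have hn2 : (2 : ℝ) ≤ n := by exact_mod_cast h
      have ha0 : 0 ≤ a := by
        rw [ha]
        have : (1 + θ) / n ≤ 1 := by
          rw [div_le_one hnR]; linarith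
        linarith
      have hag : a ≤ g ^ 2 := by
        have hsq : (0:ℝ) ≤ ((1 + θ) / (2 * (n:ℝ))) ^ 2 := sq_nonneg _
        have he : (1 - (1 + θ) / (2 * (n:ℝ))) ^ 2
            = 1 - (1 + θ) / (n:ℝ) + ((1 + θ) / (2 * (n:ℝ))) ^ 2 := by
          field_simp; ring
        rw [ha, hg, he]; linarith
      have hA : a ^ t ≤ (g ^ 2) ^ t := pow_le_pow_left₀ ha0 hag t
      have e : (g ^ 2) ^ t = (g ^ t) ^ 2 := by rw [← pow_mul, ← pow_mul, mul_comm]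
      have hsub : a ^ t - (g ^ t) ^ 2 ≤ 0 := by rw [← e]; linarith
      have : 0 ≤ (n : ℝ) * ((n : ℝ) - 1) := by nlinarith
      exact mul_nonpos_of_nonneg_of_nonpos this hsub
  have hterm1 : (n : ℝ) * (θ + g ^ t) * (1 - g ^ t) ≤ n := by
    nlinarith [sq_nonneg (g ^ t), mul_nonneg (sub_nonneg.mpr hθ1) (sub_nonneg.mpr hGt1)]
  have hnum : (n : ℝ) * (θ + g ^ t) * (1 - g ^ t)
      + (n : ℝ) * ((n : ℝ) - 1) * (a ^ t - (g ^ t) ^ 2) ≤ n := by linarith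
  have hpos : (0:ℝ) < (1 + θ) ^ 2 := by positivity
  calc (((n : ℝ) * θ + n * g ^ t) / (1 + θ)) ^ 2
        + ((n : ℝ) * (θ + g ^ t) * (1 - g ^ t)
            + (n : ℝ) * ((n : ℝ) - 1) * (a ^ t - (g ^ t) ^ 2)) / (1 + θ) ^ 2
        - (((n : ℝ) * θ + n * g ^ t) / (1 + θ)) ^ 2
      = ((n : ℝ) * (θ + g ^ t) * (1 - g ^ t)
            + (n : ℝ) * ((n : ℝ) - 1) * (a ^ t - (g ^ t) ^ 2)) / (1 + θ) ^ 2 := by ring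
    _ ≤ (n : ℝ) / (1 + θ) ^ 2 := by gcongr
end

section
/- Let (S_t) be a Markov chain on {0,...,n} with |S_{t+1} − S_t| ≤ 1 and E[S_t | S_0,...,S_i] = γ^{t−i}(S_i − nθ/(1+θ)) + nθ/(1+θ) for all 0 ≤ i ≤ t, where γ = 1 − (1+θ)/(2n) and θ ∈ (0,1]. Then the martingale Y_i = E[S_t | S_0,...,S_i] has bounded differences |Y_i − Y_{i−1}| ≤ (3/2) γ^{t−i}. -/
/-- If `0 ≤ S_i ≤ n`, `|S_{i+1} − S_i| ≤ 1`, and the Doob martingale is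
`Y_i = γ^{t−i}(S_i − nθ/(1+θ)) + nθ/(1+θ)` with `γ = 1 − (1+θ)/(2n)`, then
`|Y_i − Y_{i−1}| ≤ (3/2) γ^{t−i}` for `1 ≤ i ≤ t`. -/
theorem stmt10 (n : ℕ) (hn : 0 < n) (θ : ℝ) (hθ0 : 0 < θ) (hθ1 : θ ≤ 1)
    (S : ℕ → ℝ) (hS : ∀ i, 0 ≤ S i ∧ S i ≤ n) (hstep : ∀ i, |S (i + 1) - S i| ≤ 1)
    (t : ℕ) (Y : ℕ → ℝ)
    (hY : ∀ i, i ≤ t →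
      Y i = (1 - (1 + θ) / (2 * n)) ^ (t - i) * (S i - n * θ / (1 + θ)) + n * θ / (1 + θ))
    (i : ℕ) (hi1 : 1 ≤ i) (hit : i ≤ t) :
    |Y i - Y (i - 1)| ≤ (3 / 2) * (1 - (1 + θ) / (2 * n)) ^ (t - i) := by
  have hn' : (1:ℝ) ≤ n := by exact_mod_cast hn
  have hθp : (0:ℝ) < 1 + θ := by linarith
  set γ : ℝ := 1 - (1 + θ) / (2 * n) with hγ
  set c : ℝ := n * θ / (1 + θ) with hc
  have hγ0 : 0 ≤ γ := by
    have : (1 + θ) / (2 * n) ≤ 1 := by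
      rw [div_le_one (by positivity)]
      nlinarith
    simp [hγ]; linarith
  have h1 : Y i = γ ^ (t - i) * (S i - c) + c := hY i hit
  have h2 : Y (i - 1) = γ ^ (t - (i - 1)) * (S (i - 1) - c) + c := hY (i - 1) (by omega)
  have hpow : t - (i - 1) = (t - i) + 1 := by omega
  have hdiff : Y i - Y (i - 1)
      = γ ^ (t - i) * ((S i - S (i - 1)) + (1 - γ) * (S (i - 1) - c)) := by
    rw [h1, h2, hpow, pow_succ]; ring
  rw [hdiff, abs_mul, abs_pow, abs_of_nonneg hγ0, mul_comm]
  apply mul_le_mul_of_nonneg_right _ (pow_nonneg hγ0 _)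
  have hstepi : |S i - S (i - 1)| ≤ 1 := by
    have h := hstep (i - 1)
    rwa [show i - 1 + 1 = i from by omega] at h
  have hS0 := (hS (i - 1)).1
  have hS1 := (hS (i - 1)).2
  have hcn : c * (1 + θ) = n * θ := by
    rw [hc]; field_simp
  have key : |(1 - γ) * (S (i - 1) - c)| ≤ 1 / 2 := by
    have h1γ : (1 - γ) * (S (i - 1) - c) = ((1 + θ) * (S (i - 1) - c)) / (2 * n) := by
      rw [hγ]; field_simp; ring
    rw [abs_le, h1γ]
    constructor
    · rw [le_div_iff₀ (by positivity)]; nlinarith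
    · rw [div_le_iff₀ (by positivity)]; nlinarith
  calc |S i - S (i - 1) + (1 - γ) * (S (i - 1) - c)|
      ≤ |S i - S (i - 1)| + |(1 - γ) * (S (i - 1) - c)| := abs_add_le _ _
    _ ≤ 1 + 1 / 2 := add_le_add hstepi key
    _ = 3 / 2 := by norm_num
end

section
/- Let (R_j) be a non-negative supermartingale adapted to (W_j) with R_0 = k, increments bounded above by B (R_{j+1} − R_j ≤ B), and conditional variance Var(R_{j+1} | W_0,...,W_j) ≥ σ² > 0 on the event {τ > j}, where τ is a stopping time. If h ≥ 2B, then for any u > 0, P_k{τ > u} ≤ k/h + 3kh/(u σ²). -/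
open MeasureTheory

/-- Expansion of `∫ (a - g)²` over a finite measure. -/
private lemma expand_sq_aux {Ω : Type*} {m : MeasurableSpace Ω} (ν : Measure Ω)
    [IsFiniteMeasure ν] {g : Ω → ℝ} (a : ℝ)
    (hg : Integrable g ν) (hg2 : Integrable (fun ω => g ω ^ 2) ν) :
    ∫ ω, (a - g ω) ^ 2 ∂ν
      = (ν Set.univ).toReal * a ^ 2 - 2 * a * ∫ ω, g ω ∂ν + ∫ ω, g ω ^ 2 ∂ν := by
  have hfun : (fun ω => (a - g ω) ^ 2) = fun ω => (a ^ 2 - 2 * a * g ω) + g ω ^ 2 := by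
    funext ω; ring
  have h1 : Integrable (fun ω => a ^ 2 - 2 * a * g ω) ν :=
    (integrable_const _).sub (hg.const_mul _)
  have h2 : Integrable (fun ω => (2 * a) * g ω) ν := hg.const_mul _
  rw [hfun, integral_add h1 hg2]
  have h3 : ∫ ω, (a ^ 2 - 2 * a * g ω) ∂ν = (∫ _ω, a ^ 2 ∂ν) - ∫ ω, 2 * a * g ω ∂ν :=
    integral_sub (integrable_const _) h2
  rw [h3, integral_const, measureReal_def, integral_const_mul, smul_eq_mul]

private lemma stoppedProcess_natCoe {Ω : Type*} (R : ℕ → Ω → ℝ) (G : Ω → ℕ) (s : ℕ) (ω : Ω) :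
    stoppedProcess R (fun x => (G x : WithTop ℕ)) s ω = R (min s (G ω)) ω := by
  rcases le_total s (G ω) with hs | hs
  · rw [min_eq_left hs]; exact stoppedProcess_eq_of_le (WithTop.coe_le_coe.2 hs)
  · rw [min_eq_right hs]; exact stoppedProcess_eq_of_ge (WithTop.coe_le_coe.2 hs)

/-- One-step second-moment inequality for the stopped process. -/
private lemma step_ineq {Ω : Type*} {m : MeasurableSpace Ω} {μ : Measure Ω}
    [IsProbabilityMeasure μ] {F : Filtration ℕ m} {R : ℕ → Ω → ℝ} {τ G : Ω → ℕ}
    {σ c : ℝ} (hσ : 0 < σ) (hc0 : 0 ≤ c)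
    (hsuper : Supermartingale R F μ)
    (hG : IsStoppingTime F (fun x => (G x : WithTop ℕ)))
    (hGτ : ∀ ω, G ω ≤ τ ω)
    (hbd : ∀ ω s, s ≤ G ω → 0 ≤ R s ω ∧ R s ω ≤ c)
    (hvar : ∀ j, ∀ᵐ ω ∂μ, j < τ ω →
      σ ^ 2 ≤ (μ[(fun ω' => (R (j + 1) ω' - (μ[R (j + 1)|F j]) ω') ^ 2)|F j]) ω)
    (t : ℕ) :
    (∫ ω, (c - stoppedProcess R (fun x => (G x : WithTop ℕ)) t ω) ^ 2 ∂μ) + σ ^ 2 * (μ {ω | t < G ω}).toReal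
      ≤ ∫ ω, (c - stoppedProcess R (fun x => (G x : WithTop ℕ)) (t + 1) ω) ^ 2 ∂μ := by
  classical
  -- basic facts about the stopped process
  have hP : ∀ s ω, stoppedProcess R (fun x => (G x : WithTop ℕ)) s ω = R (min s (G ω)) ω := fun s ω => stoppedProcess_natCoe R G s ω
  have hPbd : ∀ s ω, 0 ≤ stoppedProcess R (fun x => (G x : WithTop ℕ)) s ω ∧ stoppedProcess R (fun x => (G x : WithTop ℕ)) s ω ≤ c :=
    fun s ω => hbd ω (min s (G ω)) (min_le_right _ _)
  have hPsm : ∀ s, StronglyMeasurable (stoppedProcess R (fun x => (G x : WithTop ℕ)) s) :=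
    fun s => ((hsuper.stronglyAdapted.stoppedProcess_of_discrete hG) s).mono (F.le s)
  have intX : ∀ s, Integrable (fun ω => (c - stoppedProcess R (fun x => (G x : WithTop ℕ)) s ω) ^ 2) μ := by
    intro s
    refine (integrable_const (c ^ 2)).mono'
      ((stronglyMeasurable_const.sub (hPsm s)).pow 2).aestronglyMeasurable
      (ae_of_all _ fun ω => ?_)
    have h1 := (hPbd s ω).1
    have h2 := (hPbd s ω).2
    rw [Real.norm_eq_abs, abs_of_nonneg (by positivity)]
    nlinarith
  -- the event `S = {t < G}`
  set S : Set Ω := {ω | t < G ω} with hSdef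
  have hS : MeasurableSet[F t] S := by
    have : S = {ω | (G ω : WithTop ℕ) ≤ t}ᶜ := by ext ω; simp [hSdef, not_le]
    rw [this]; exact (hG t).compl
  have hSm : MeasurableSet S := F.le t _ hS
  -- split integrals over S and Sᶜ
  have hsplit : ∀ s, ∫ ω, (c - stoppedProcess R (fun x => (G x : WithTop ℕ)) s ω) ^ 2 ∂μ
      = (∫ ω in S, (c - stoppedProcess R (fun x => (G x : WithTop ℕ)) s ω) ^ 2 ∂μ)
        + ∫ ω in Sᶜ, (c - stoppedProcess R (fun x => (G x : WithTop ℕ)) s ω) ^ 2 ∂μ :=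
    fun s => (integral_add_compl hSm (intX s)).symm
  have hcompl : (∫ ω in Sᶜ, (c - stoppedProcess R (fun x => (G x : WithTop ℕ)) (t + 1) ω) ^ 2 ∂μ)
      = ∫ ω in Sᶜ, (c - stoppedProcess R (fun x => (G x : WithTop ℕ)) t ω) ^ 2 ∂μ := by
    refine setIntegral_congr_fun hSm.compl fun ω hω => ?_
    have hGt : G ω ≤ t := by simpa [hSdef, not_lt] using hω
    simp only [hP, min_eq_right hGt, min_eq_right (hGt.trans t.le_succ)]
  -- reduce to the inequality on S
  suffices hmain : (∫ ω in S, (c - stoppedProcess R (fun x => (G x : WithTop ℕ)) t ω) ^ 2 ∂μ)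
      + σ ^ 2 * (μ S).toReal ≤ ∫ ω in S, (c - stoppedProcess R (fun x => (G x : WithTop ℕ)) (t + 1) ω) ^ 2 ∂μ by
    rw [hsplit t, hsplit (t + 1), hcompl]; linarith
  -- rewrite the integrals on S in terms of `R t` and `R (t+1)`
  have hSt : (∫ ω in S, (c - stoppedProcess R (fun x => (G x : WithTop ℕ)) t ω) ^ 2 ∂μ)
      = ∫ ω in S, (c - R t ω) ^ 2 ∂μ := by
    refine setIntegral_congr_fun hSm fun ω hω => ?_
    have : t < G ω := hω
    simp only [hP, min_eq_left this.le]
  have hSt1 : (∫ ω in S, (c - stoppedProcess R (fun x => (G x : WithTop ℕ)) (t + 1) ω) ^ 2 ∂μ)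
      = ∫ ω in S, (c - R (t + 1) ω) ^ 2 ∂μ := by
    refine setIntegral_congr_fun hSm fun ω hω => ?_
    have : t < G ω := hω
    simp only [hP, min_eq_left (Nat.succ_le_of_lt this)]
  rw [hSt, hSt1]
  set Z : Ω → ℝ := R (t + 1) with hZdef
  set mc : Ω → ℝ := μ[R (t + 1)|F t] with hmcdef
  by_cases hf : Integrable (fun ω' => (Z ω' - mc ω') ^ 2) μ
  · -- main case
    -- bounds for Z on S
    have hZbd : ∀ ω ∈ S, 0 ≤ Z ω ∧ Z ω ≤ c := fun ω hω =>
      hbd ω (t + 1) (Nat.succ_le_of_lt hω)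
    have hZsm : StronglyMeasurable Z := (hsuper.stronglyAdapted (t + 1)).mono (F.le (t + 1))
    have hmc_sm : StronglyMeasurable[F t] mc := stronglyMeasurable_condExp
    have hmc_int : Integrable mc μ := integrable_condExp
    have hZint : Integrable Z μ := hsuper.integrable (t + 1)
    -- integrability of pieces on S
    have intZ : IntegrableOn Z S μ := hZint.integrableOn
    have intZsq : IntegrableOn (fun ω => Z ω ^ 2) S μ := by
      refine Integrable.mono' (integrable_const (c ^ 2)) ((hZsm.pow 2).aestronglyMeasurable.restrict)
        ?_
      refine (ae_restrict_iff' hSm).2 (ae_of_all _ fun ω hω => ?_)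
      have h1 := (hZbd ω hω).1
      have h2 := (hZbd ω hω).2
      rw [Real.norm_eq_abs, abs_of_nonneg (by positivity)]
      nlinarith
    -- cross term via the pull-out property
    have hg_sm : StronglyMeasurable[F t] (S.indicator mc) := hmc_sm.indicator hS
    have hgZ_int : Integrable (S.indicator mc * Z) μ := by
      refine (hmc_int.norm.const_mul c).mono'
        (((hg_sm.mono (F.le t)).mul hZsm).aestronglyMeasurable) (ae_of_all _ fun ω => ?_)
      by_cases hω : ω ∈ S
      · simp only [Pi.mul_apply, Set.indicator_of_mem hω, norm_mul]
        have h1 := (hZbd ω hω).1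
        have h2 := (hZbd ω hω).2
        rw [mul_comm (c : ℝ)]
        exact mul_le_mul_of_nonneg_left (by rw [Real.norm_eq_abs, abs_of_nonneg h1]; exact h2)
          (norm_nonneg _)
      · simp only [Pi.mul_apply, Set.indicator_of_notMem hω, zero_mul, norm_zero]
        positivity
    have hpull : μ[S.indicator mc * Z|F t] =ᵐ[μ] S.indicator mc * mc :=
      condExp_mul_of_stronglyMeasurable_left hg_sm hgZ_int hZint
    have hcross : (∫ ω in S, mc ω * Z ω ∂μ) = ∫ ω in S, mc ω ^ 2 ∂μ := by
      have h1 : (∫ ω, (S.indicator mc * Z) ω ∂μ) = ∫ ω, (S.indicator mc * mc) ω ∂μ := by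
        rw [← integral_condExp (F.le t) (f := S.indicator mc * Z)]
        exact integral_congr_ae hpull
      have h2 : (∫ ω, (S.indicator mc * Z) ω ∂μ) = ∫ ω in S, mc ω * Z ω ∂μ := by
        rw [← integral_indicator hSm]
        congr 1; funext ω
        simp only [Pi.mul_apply]
        exact (Set.indicator_mul_left S mc Z).symm
      have h3 : (∫ ω, (S.indicator mc * mc) ω ∂μ) = ∫ ω in S, mc ω ^ 2 ∂μ := by
        rw [← integral_indicator hSm]
        congr 1; funext ω
        simp only [Pi.mul_apply, sq]
        exact (Set.indicator_mul_left S mc mc).symm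
      rw [← h2, h1, h3]
    -- integrability of mc² and mc*Z on S
    have intmZ : IntegrableOn (fun ω => mc ω * Z ω) S μ := by
      have hind : Integrable (S.indicator fun ω => mc ω * Z ω) μ := by
        have heq : (S.indicator fun ω => mc ω * Z ω) = S.indicator mc * Z := by
          funext ω
          simp only [Pi.mul_apply]
          exact Set.indicator_mul_left S mc Z
        rw [heq]; exact hgZ_int
      exact (integrable_indicator_iff hSm).1 hind
    have intm2 : IntegrableOn (fun ω => mc ω ^ 2) S μ := by
      have hfun : (fun ω => mc ω ^ 2)
          = fun ω => ((Z ω - mc ω) ^ 2 - Z ω ^ 2) + 2 * (mc ω * Z ω) := by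
        funext ω; ring
      rw [hfun]
      exact (hf.integrableOn.sub intZsq).add (intmZ.const_mul 2)
    have intm : IntegrableOn mc S μ := hmc_int.integrableOn
    -- variance lower bound on S
    have hSsub : ∀ ω ∈ S, t < τ ω := fun ω hω => lt_of_lt_of_le hω (hGτ ω)
    have hvarS : σ ^ 2 * (μ S).toReal ≤ ∫ ω in S, (Z ω - mc ω) ^ 2 ∂μ := by
      rw [← setIntegral_condExp (F.le t) hf hS]
      have hconst : (∫ _ω in S, σ ^ 2 ∂μ) = σ ^ 2 * (μ S).toReal := by
        rw [setIntegral_const, smul_eq_mul, mul_comm, measureReal_def]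
      rw [← hconst]
      refine setIntegral_mono_ae_restrict (integrable_const _).integrableOn
        integrable_condExp.integrableOn ?_
      refine (ae_restrict_iff' hSm).2 ?_
      filter_upwards [hvar t] with ω hω hmem
      exact hω (hSsub ω hmem)
    -- expansion of the variance integral
    have hf_exp : (∫ ω in S, (Z ω - mc ω) ^ 2 ∂μ)
        = (∫ ω in S, Z ω ^ 2 ∂μ) - ∫ ω in S, mc ω ^ 2 ∂μ := by
      have hfun : (fun ω => (Z ω - mc ω) ^ 2)
          = fun ω => (Z ω ^ 2 - 2 * (mc ω * Z ω)) + mc ω ^ 2 := by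
        funext ω; ring
      have ha : IntegrableOn (fun ω => Z ω ^ 2 - 2 * (mc ω * Z ω)) S μ :=
        intZsq.sub (intmZ.const_mul 2)
      rw [hfun, integral_add ha intm2]
      have hb : ∫ ω in S, (Z ω ^ 2 - 2 * (mc ω * Z ω)) ∂μ
          = (∫ ω in S, Z ω ^ 2 ∂μ) - ∫ ω in S, 2 * (mc ω * Z ω) ∂μ :=
        integral_sub intZsq (intmZ.const_mul 2)
      rw [hb, integral_const_mul, hcross]
      ring
    -- ∫_S Z = ∫_S mc
    have hZmean : (∫ ω in S, Z ω ∂μ) = ∫ ω in S, mc ω ∂μ :=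
      (setIntegral_condExp (F.le t) hZint hS).symm
    -- expand both squares
    have hrestr_univ : (μ.restrict S) Set.univ = μ S := by
      rw [Measure.restrict_apply_univ]
    have hexpZ : (∫ ω in S, (c - Z ω) ^ 2 ∂μ)
        = (μ S).toReal * c ^ 2 - 2 * c * (∫ ω in S, Z ω ∂μ) + ∫ ω in S, Z ω ^ 2 ∂μ := by
      rw [expand_sq_aux (μ.restrict S) c intZ intZsq, hrestr_univ]
    have hexpm : (∫ ω in S, (c - mc ω) ^ 2 ∂μ)
        = (μ S).toReal * c ^ 2 - 2 * c * (∫ ω in S, mc ω ∂μ) + ∫ ω in S, mc ω ^ 2 ∂μ := by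
      rw [expand_sq_aux (μ.restrict S) c intm intm2, hrestr_univ]
    -- compare (c - R t)² with (c - mc)² on S
    have hmle : mc ≤ᵐ[μ] R t := hsuper.condExp_ae_le (Nat.le_succ t)
    have hRtc : ∀ ω ∈ S, 0 ≤ R t ω ∧ R t ω ≤ c := fun ω hω => hbd ω t (le_of_lt hω)
    have hcomp : (∫ ω in S, (c - R t ω) ^ 2 ∂μ) ≤ ∫ ω in S, (c - mc ω) ^ 2 ∂μ := by
      have intm2' : IntegrableOn (fun ω => (c - mc ω) ^ 2) S μ := by
        have hfun : (fun ω => (c - mc ω) ^ 2)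
            = fun ω => (c ^ 2 - 2 * c * mc ω) + mc ω ^ 2 := by funext ω; ring
        rw [hfun]
        exact (((integrable_const _).integrableOn).sub (intm.const_mul _)).add intm2
      have intRt2 : IntegrableOn (fun ω => (c - R t ω) ^ 2) S μ := by
        refine Integrable.mono' (integrable_const (c ^ 2))
          ((stronglyMeasurable_const.sub ((hsuper.stronglyAdapted t).mono (F.le t))).pow
            2).aestronglyMeasurable.restrict ?_
        refine (ae_restrict_iff' hSm).2 (ae_of_all _ fun ω hω => ?_)
        have h1 := (hRtc ω hω).1
        have h2 := (hRtc ω hω).2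
        rw [Real.norm_eq_abs, abs_of_nonneg (by positivity)]
        nlinarith
      refine setIntegral_mono_ae_restrict intRt2 intm2' ?_
      refine (ae_restrict_iff' hSm).2 ?_
      filter_upwards [hmle] with ω hω hmem
      have h1 := (hRtc ω hmem).1
      have h2 := (hRtc ω hmem).2
      have hnn : 0 ≤ c - R t ω := by linarith
      exact pow_le_pow_left₀ hnn (by linarith) 2
    -- put everything together
    calc (∫ ω in S, (c - R t ω) ^ 2 ∂μ) + σ ^ 2 * (μ S).toReal
        ≤ (∫ ω in S, (c - mc ω) ^ 2 ∂μ) + σ ^ 2 * (μ S).toReal := by linarith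
      _ ≤ ∫ ω in S, (c - Z ω) ^ 2 ∂μ := by
          rw [hexpZ, hexpm, hZmean]
          have := hvarS
          rw [hf_exp] at this
          linarith
  · -- degenerate case: the conditional variance is not integrable, so `μ S = 0`
    have hzero : μ[(fun ω' => (Z ω' - mc ω') ^ 2)|F t] = 0 := condExp_of_not_integrable hf
    have hae : ∀ᵐ ω ∂μ, τ ω ≤ t := by
      filter_upwards [hvar t] with ω hω
      by_contra hlt
      push_neg at hlt
      have := hω hlt
      rw [hzero] at this
      simp only [Pi.zero_apply] at this
      nlinarith
    have hμτ : μ {ω | t < τ ω} = 0 := by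
      have heq : {ω | t < τ ω} = {ω | ¬ τ ω ≤ t} := by ext ω; simp [not_le]
      rw [heq]
      exact ae_iff.mp hae
    have hS0 : μ S = 0 := by
      refine measure_mono_null (fun ω hω => ?_) hμτ
      exact lt_of_lt_of_le hω (hGτ ω)
    have hrestr : μ.restrict S = 0 := Measure.restrict_eq_zero.2 hS0
    rw [hS0, hrestr]
    simp

/-- Modified Levin–Peres–Wilmer supermartingale bound: if `(R_j)` is a
non-negative supermartingale with `R_0 = k`, increments bounded above by `B`,
and conditional variance at least `σ² > 0` on `{τ > j}`, then for `h ≥ 2B`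
and any `u > 0`, `P{τ > u} ≤ k/h + 3kh/(uσ²)`. -/
theorem stmt19 {Ω : Type*} {m : MeasurableSpace Ω} {μ : Measure Ω}
    [IsProbabilityMeasure μ]
    (F : Filtration ℕ m) (R : ℕ → Ω → ℝ) (τ : Ω → ℕ)
    (k B σ h u : ℝ)
    (hB : 0 < B) (hσ : 0 < σ) (hh : 2 * B ≤ h) (hu : 0 < u)
    (hsuper : Supermartingale R F μ)
    (hnonneg : ∀ j ω, 0 ≤ R j ω)
    (h0 : ∀ ω, R 0 ω = k)
    (hτ : IsStoppingTime F (fun ω => (τ ω : WithTop ℕ)))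
    (hincr : ∀ j ω, R (j + 1) ω - R j ω ≤ B)
    (hvar : ∀ j, ∀ᵐ ω ∂μ, j < τ ω →
      σ ^ 2 ≤ (μ[(fun ω' => (R (j + 1) ω' - (μ[R (j + 1)|F j]) ω') ^ 2)|F j]) ω) :
    (μ {ω | u < (τ ω : ℝ)}).toReal ≤ k / h + 3 * k * h / (u * σ ^ 2) := by
  classical
  have hh0 : 0 < h := lt_of_lt_of_le (by linarith) hh
  -- nonemptiness and nonnegativity of k
  have hne : Nonempty Ω := by
    rcases isEmpty_or_nonempty Ω with he | hn
    · exfalso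
      have : μ Set.univ = 1 := measure_univ
      rw [Set.univ_eq_empty_iff.2 he, measure_empty] at this
      exact zero_ne_one this
    · exact hn
  obtain ⟨ω₀⟩ := hne
  have hk0 : 0 ≤ k := h0 ω₀ ▸ hnonneg 0 ω₀
  -- trivial case h ≤ k
  by_cases hkh : h ≤ k
  · have h1 : (μ {ω | u < (τ ω : ℝ)}).toReal ≤ 1 := by
      rw [← ENNReal.toReal_one]
      exact ENNReal.toReal_mono ENNReal.one_ne_top prob_le_one
    have h2 : (1 : ℝ) ≤ k / h := (one_le_div hh0).2 hkh
    have h3 : 0 ≤ 3 * k * h / (u * σ ^ 2) := by positivity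
    linarith
  push_neg at hkh
  -- set up the horizon `n`, the hitting time `H`, and the stopping time `G`
  set n : ℕ := ⌊u⌋₊ + 1 with hn
  have hun : u < (n : ℝ) := by
    have := Nat.lt_floor_add_one u
    push_cast [hn]
    exact this
  have hn1 : 1 ≤ n := Nat.le_add_left 1 _
  have hset : {ω | u < (τ ω : ℝ)} = {ω | n ≤ τ ω} := by
    ext ω
    simp only [Set.mem_setOf_eq, hn]
    rw [← Nat.floor_lt hu.le, Nat.lt_iff_add_one_le]
  set H : Ω → ℕ := hittingBtwn R (Set.Ici h) 0 n with hHdef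
  have hH : IsStoppingTime F (fun x => (H x : WithTop ℕ)) :=
    Adapted.isStoppingTime_hittingBtwn hsuper.stronglyAdapted.adapted measurableSet_Ici
  set G : Ω → ℕ := fun ω => min (H ω) (min (τ ω) n) with hGdef
  have hG : IsStoppingTime F (fun x => (G x : WithTop ℕ)) := by
    intro i
    have h' := (hH.min (hτ.min (isStoppingTime_const F n))) i
    convert h' using 1
    ext ω; simp [hGdef]
  have hGτ : ∀ ω, G ω ≤ τ ω := fun ω => le_trans (min_le_right _ _) (min_le_left _ _)
  have hGn : ∀ ω, G ω ≤ n := fun ω => le_trans (min_le_right _ _) (min_le_right _ _)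
  have hGH : ∀ ω, G ω ≤ H ω := fun ω => min_le_left _ _
  set c : ℝ := h + B with hc
  have hc0 : 0 ≤ c := by positivity
  -- the process is bounded by `c` up to time `G`
  have hbd : ∀ ω, ∀ s, s ≤ G ω → 0 ≤ R s ω ∧ R s ω ≤ c := by
    intro ω s hs
    refine ⟨hnonneg s ω, ?_⟩
    match s with
    | 0 => rw [h0 ω]; linarith
    | (r + 1) =>
      have hrH : r < H ω := lt_of_lt_of_le (Nat.lt_of_succ_le hs) (hGH ω)
      have hnot : R r ω ∉ Set.Ici h := notMem_of_lt_hittingBtwn hrH (Nat.zero_le r)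
      have hlt : R r ω < h := by simpa [Set.mem_Ici, not_le] using hnot
      have := hincr r ω
      linarith
  -- second-moment induction
  have hstep := step_ineq (c := c) hσ hc0 hsuper hG hGτ hbd hvar
  have hsum : ∀ t : ℕ,
      (∫ ω, (c - stoppedProcess R (fun x => (G x : WithTop ℕ)) 0 ω) ^ 2 ∂μ)
        + σ ^ 2 * (∑ s ∈ Finset.range t, (μ {ω | s < G ω}).toReal)
        ≤ ∫ ω, (c - stoppedProcess R (fun x => (G x : WithTop ℕ)) t ω) ^ 2 ∂μ := by
    intro t
    induction t with
    | zero => simp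
    | succ t ih =>
      rw [Finset.sum_range_succ, mul_add]
      have := hstep t
      linarith
  have he0 : (∫ ω, (c - stoppedProcess R (fun x => (G x : WithTop ℕ)) 0 ω) ^ 2 ∂μ) = (c - k) ^ 2 := by
    have : ∀ ω, (c - stoppedProcess R (fun x => (G x : WithTop ℕ)) 0 ω) ^ 2 = (c - k) ^ 2 := by
      intro ω
      have h1 : stoppedProcess R (fun x => (G x : WithTop ℕ)) 0 ω = R 0 ω := by
        rw [stoppedProcess_natCoe, Nat.zero_min]
      rw [h1, h0 ω]
    rw [integral_congr_ae (ae_of_all _ this), integral_const]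
    simp
  -- upper bound for the second moment at time n
  have hPsm : ∀ s, StronglyMeasurable (stoppedProcess R (fun x => (G x : WithTop ℕ)) s) :=
    fun s => ((hsuper.stronglyAdapted.stoppedProcess_of_discrete hG) s).mono (F.le s)
  have hub : (∫ ω, (c - stoppedProcess R (fun x => (G x : WithTop ℕ)) n ω) ^ 2 ∂μ) ≤ c ^ 2 := by
    have hptw : ∀ ω, (c - stoppedProcess R (fun x => (G x : WithTop ℕ)) n ω) ^ 2 ≤ c ^ 2 := by
      intro ω
      have h1 := (hbd ω (min n (G ω)) (min_le_right _ _)).1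
      have h2 := (hbd ω (min n (G ω)) (min_le_right _ _)).2
      have h3 : stoppedProcess R (fun x => (G x : WithTop ℕ)) n ω = R (min n (G ω)) ω := stoppedProcess_natCoe R G n ω
      nlinarith [h1, h2]
    have hint : Integrable (fun ω => (c - stoppedProcess R (fun x => (G x : WithTop ℕ)) n ω) ^ 2) μ := by
      refine (integrable_const (c ^ 2)).mono'
        ((stronglyMeasurable_const.sub (hPsm n)).pow 2).aestronglyMeasurable
        (ae_of_all _ fun ω => ?_)
      rw [Real.norm_eq_abs, abs_of_nonneg (by positivity)]
      exact hptw ω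
    calc (∫ ω, (c - stoppedProcess R (fun x => (G x : WithTop ℕ)) n ω) ^ 2 ∂μ)
        ≤ ∫ _ω, c ^ 2 ∂μ := integral_mono hint (integrable_const _) hptw
      _ = c ^ 2 := by rw [integral_const]; simp
  -- Markov-type bound for the event {G = n}
  set D : Set Ω := {ω | G ω = n} with hDdef
  have hDsub : ∀ s, s < n → D ⊆ {ω | s < G ω} := by
    intro s hs ω hω
    have : G ω = n := hω
    simpa [this] using hs
  have hDsum : (n : ℝ) * (μ D).toReal
      ≤ ∑ s ∈ Finset.range n, (μ {ω | s < G ω}).toReal := by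
    calc (n : ℝ) * (μ D).toReal = ∑ _s ∈ Finset.range n, (μ D).toReal := by
          rw [Finset.sum_const, Finset.card_range, nsmul_eq_mul]
      _ ≤ ∑ s ∈ Finset.range n, (μ {ω | s < G ω}).toReal := by
          refine Finset.sum_le_sum fun s hs => ?_
          exact ENNReal.toReal_mono (measure_ne_top _ _)
            (measure_mono (hDsub s (Finset.mem_range.1 hs)))
  have hMarkov : σ ^ 2 * ((n : ℝ) * (μ D).toReal) ≤ 3 * h * k := by
    have h1 := hsum n
    rw [he0] at h1
    have h2 : σ ^ 2 * ((n : ℝ) * (μ D).toReal)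
        ≤ σ ^ 2 * ∑ s ∈ Finset.range n, (μ {ω | s < G ω}).toReal :=
      mul_le_mul_of_nonneg_left hDsum (by positivity)
    have h3 : c ^ 2 - (c - k) ^ 2 ≤ 3 * h * k := by
      have : c ^ 2 - (c - k) ^ 2 = 2 * c * k - k ^ 2 := by ring
      rw [this, hc]
      nlinarith [hk0, sq_nonneg k]
    linarith
  have hD : (μ D).toReal ≤ 3 * k * h / (u * σ ^ 2) := by
    rw [le_div_iff₀ (by positivity)]
    have hDu : u * σ ^ 2 * (μ D).toReal ≤ σ ^ 2 * ((n : ℝ) * (μ D).toReal) := by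
      have : u * σ ^ 2 * (μ D).toReal = σ ^ 2 * (u * (μ D).toReal) := by ring
      rw [this]
      refine mul_le_mul_of_nonneg_left ?_ (by positivity)
      exact mul_le_mul_of_nonneg_right hun.le ENNReal.toReal_nonneg
    calc (μ D).toReal * (u * σ ^ 2) = u * σ ^ 2 * (μ D).toReal := by ring
      _ ≤ σ ^ 2 * ((n : ℝ) * (μ D).toReal) := hDu
      _ ≤ 3 * h * k := hMarkov
      _ = 3 * k * h := by ring
  -- the maximal-inequality part: μ A ≤ k / h
  set A : Set Ω := {ω | ∃ j, j ≤ n ∧ h ≤ R j ω} with hAdef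
  have hAmeas : MeasurableSet A := by
    have : A = ⋃ (j : ℕ) (_ : j ≤ n), {ω | h ≤ R j ω} := by
      ext ω
      simp [hAdef, Set.mem_iUnion]
    rw [this]
    exact MeasurableSet.iUnion fun j => MeasurableSet.iUnion fun _ =>
      measurableSet_le measurable_const ((hsuper.stronglyAdapted j).mono (F.le j)).measurable
  have hSVint : Integrable (stoppedValue R (fun x => (H x : WithTop ℕ))) μ :=
    integrable_stoppedValue ℕ hH hsuper.integrable (fun ω => WithTop.coe_le_coe.2 (hittingBtwn_le ω))
  have hOST : (∫ ω, stoppedValue R (fun x => (H x : WithTop ℕ)) ω ∂μ) ≤ k := by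
    have h1 := (hsuper.neg).expected_stoppedValue_mono (isStoppingTime_const F 0) hH
      (fun ω => WithTop.coe_le_coe.2 (Nat.zero_le _)) (fun ω => WithTop.coe_le_coe.2 (hittingBtwn_le ω))
    have h2 : (∫ ω, stoppedValue (-R) (fun _ => WithTop.some (0 : ℕ)) ω ∂μ)
        = - ∫ ω, stoppedValue R (fun _ => WithTop.some (0 : ℕ)) ω ∂μ := by
      rw [← integral_neg]
      rfl
    have h3 : (∫ ω, stoppedValue (-R) (fun x => (H x : WithTop ℕ)) ω ∂μ) = - ∫ ω, stoppedValue R (fun x => (H x : WithTop ℕ)) ω ∂μ := by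
      rw [← integral_neg]
      rfl
    have h4 : (∫ ω, stoppedValue R (fun _ => WithTop.some (0 : ℕ)) ω ∂μ) = k := by
      have : ∀ ω, stoppedValue R (fun _ => WithTop.some (0 : ℕ)) ω = k := fun ω => h0 ω
      rw [integral_congr_ae (ae_of_all _ this), integral_const]
      simp
    rw [h2, h3, h4] at h1
    linarith
  have hA : (μ A).toReal ≤ k / h := by
    rw [le_div_iff₀ hh0]
    have h1 : (μ A).toReal * h ≤ ∫ ω in A, stoppedValue R (fun x => (H x : WithTop ℕ)) ω ∂μ := by
      have h2 : (∫ _ω in A, h ∂μ) ≤ ∫ ω in A, stoppedValue R (fun x => (H x : WithTop ℕ)) ω ∂μ := by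
        refine setIntegral_mono_on (integrable_const _).integrableOn
          hSVint.integrableOn hAmeas fun ω hω => ?_
        obtain ⟨j, hj, hjR⟩ := hω
        exact stoppedValue_hittingBtwn_mem ⟨j, ⟨Nat.zero_le j, hj⟩, hjR⟩
      rw [setIntegral_const, smul_eq_mul] at h2
      exact h2
    have h3 : (∫ ω in A, stoppedValue R (fun x => (H x : WithTop ℕ)) ω ∂μ) ≤ ∫ ω, stoppedValue R (fun x => (H x : WithTop ℕ)) ω ∂μ :=
      setIntegral_le_integral hSVint (ae_of_all _ fun ω => hnonneg _ ω)
    linarith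
  -- inclusion {n ≤ τ} ⊆ A ∪ D
  have hincl : {ω | n ≤ τ ω} ⊆ A ∪ D := by
    intro ω hω
    by_cases hAω : ω ∈ A
    · exact Or.inl hAω
    · refine Or.inr ?_
      have hτn : n ≤ τ ω := hω
      have hHn : H ω = n := by
        by_contra hne
        have hlt : H ω < n := lt_of_le_of_ne (hittingBtwn_le ω) hne
        exact hAω ⟨H ω, hlt.le, hittingBtwn_mem_set_of_hittingBtwn_lt hlt⟩
      show G ω = n
      rw [hGdef]
      simp [hHn, min_eq_right hτn]
  -- conclusion
  rw [hset]
  have hfin : (μ {ω | n ≤ τ ω}).toReal ≤ (μ A).toReal + (μ D).toReal := by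
    have h1 : μ {ω | n ≤ τ ω} ≤ μ A + μ D :=
      le_trans (measure_mono hincl) (measure_union_le A D)
    have h2 : μ A + μ D ≠ ⊤ :=
      ENNReal.add_ne_top.2 ⟨measure_ne_top _ _, measure_ne_top _ _⟩
    calc (μ {ω | n ≤ τ ω}).toReal ≤ (μ A + μ D).toReal := ENNReal.toReal_mono h2 h1
      _ = (μ A).toReal + (μ D).toReal :=
        ENNReal.toReal_add (measure_ne_top _ _) (measure_ne_top _ _)
  linarith
end
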